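/- Let A : [0,1]² → ℝ be C¹, and u a calibrated backward-subaction for A with value m. If (x, y(x)) satisfies u(x) = A(x,y(x)) + u(y(x)) − m and y(x) ∈ (0,1), then −∂A/∂y (x, y(x)) belongs to the superdifferential D⁺u(y(x)). -/

import Mathlib

open Filter

/-- superdifferential -/
def Dplus (u : ℝ → ℝ) (x : ℝ) : Set ℝ :=
  {p | limsup (fun v => (u (x + v) - u x - p * v) / |v|) (nhdsWithin 0 {(0:ℝ)}ᶜ) ≤ 0}

lemma limsup_nonpos_of_forall_eventually_le (l : Filter ℝ) (g : ℝ → ℝ)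
    (h : ∀ ε > (0:ℝ), ∀ᶠ v in l, g v ≤ ε) : limsup g l ≤ 0 := by
  rw [limsup_eq]
  set S : Set ℝ := {a | ∀ᶠ v in l, g v ≤ a} with hS
  by_cases hb : BddBelow S
  · have h2 : ∀ ε > (0:ℝ), sInf S ≤ ε := fun ε hε => csInf_le hb (h ε hε)
    have := le_of_forall_pos_le_add (a := sInf S) (b := 0) (by simpa using h2)
    simpa using this
  · simp [Real.sInf_of_not_bddBelow hb]

/-- if u is a calibrated backward-subaction for the C¹ potential A and
(x, y(x)) satisfies u(x) = A(x,y(x)) + u(y(x)) - m with y(x) ∈ (0,1), then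
-∂A/∂y(x,y(x)) ∈ D⁺u(y(x)). -/
theorem stmt12 (A : ℝ → ℝ → ℝ) (hA : ContDiff ℝ 1 (Function.uncurry A))
    (m : ℝ) (u : ℝ → ℝ) (hu : ContinuousOn u (Set.Icc 0 1))
    (hsub : ∀ z ∈ Set.Icc (0:ℝ) 1, ∀ w ∈ Set.Icc (0:ℝ) 1, u z ≥ A z w + u w - m)
    (x : ℝ) (hx : x ∈ Set.Icc (0:ℝ) 1) (y : ℝ) (hy : y ∈ Set.Ioo (0:ℝ) 1)
    (hcal : u x = A x y + u y - m) :
    -deriv (fun t => A x t) y ∈ Dplus u y := by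
  set d := deriv (fun t => A x t) y with hd
  set l := nhdsWithin (0:ℝ) {(0:ℝ)}ᶜ with hl
  -- differentiability of t ↦ A x t
  have hdiffA : Differentiable ℝ (fun t : ℝ => A x t) := by
    have h1 : Differentiable ℝ (Function.uncurry A) := hA.differentiable one_ne_zero
    exact h1.comp (Differentiable.prodMk (differentiable_const x) differentiable_id)
  have hder : HasDerivAt (fun t => A x t) d y := (hdiffA y).hasDerivAt
  -- tendsto of the difference quotient
  have hlo := hder.isLittleO
  have htq : Tendsto (fun t : ℝ => (A x t - A x y - (t - y) * d) / (t - y)) (nhds y)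
      (nhds 0) := by
    rw [Asymptotics.isLittleO_iff_tendsto] at hlo
    · simpa [smul_eq_mul, mul_comm] using hlo
    · intro t ht
      have : t = y := by linarith [sub_eq_zero.mp ht]
      simp [this]
  have hmap : Tendsto (fun v : ℝ => y + v) l (nhds y) := by
    have h0 : Tendsto (fun v : ℝ => y + v) (nhds 0) (nhds (y + 0)) :=
      tendsto_const_nhds.add tendsto_id
    simpa using h0.mono_left nhdsWithin_le_nhds
  have hq : Tendsto (fun v : ℝ => (A x (y + v) - A x y - v * d) / v) l (nhds 0) := by
    refine (htq.comp hmap).congr fun v => ?_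
    simp [Function.comp, add_sub_cancel_left]
  -- f v := -(A x (y+v) - A x y - d v)/|v| tends to 0
  have hf : Tendsto (fun v : ℝ => -((A x (y + v) - A x y - v * d) / |v|)) l (nhds 0) := by
    rw [tendsto_zero_iff_norm_tendsto_zero] at hq ⊢
    refine hq.congr (fun v => ?_)
    simp [abs_div, abs_abs]
  -- eventual inequality
  have hev : ∀ᶠ v in l, (u (y + v) - u y - (-d) * v) / |v|
      ≤ -((A x (y + v) - A x y - v * d) / |v|) := by
    have hmem : ∀ᶠ v in l, y + v ∈ Set.Icc (0:ℝ) 1 := by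
      have hIoo : ∀ᶠ t in nhds y, t ∈ Set.Ioo (0:ℝ) 1 :=
        (isOpen_Ioo.eventually_mem hy)
      filter_upwards [hmap.eventually hIoo] with v hv using Set.Ioo_subset_Icc_self hv
    have hne : ∀ᶠ v in l, v ≠ 0 := by
      have : ∀ᶠ v in l, v ∈ ({(0:ℝ)}ᶜ : Set ℝ) := self_mem_nhdsWithin
      filter_upwards [this] with v hv using hv
    filter_upwards [hmem, hne] with v hv hv0
    have hkey : u (y + v) - u y ≤ A x y - A x (y + v) := by
      have := hsub x hx (y + v) hv
      rw [hcal] at this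
      linarith
    have hnum : u (y + v) - u y - (-d) * v ≤ -(A x (y + v) - A x y - v * d) := by
      ring_nf
      nlinarith [hkey]
    have hpos : (0:ℝ) < |v| := abs_pos.mpr hv0
    rw [← neg_div]
    gcongr
  -- conclude
  simp only [Dplus, Set.mem_setOf_eq]
  apply limsup_nonpos_of_forall_eventually_le
  intro ε hε
  have hfe : ∀ᶠ v in l, -((A x (y + v) - A x y - v * d) / |v|) ≤ ε := by
    have := hf.eventually (eventually_le_nhds hε)
    exact this
  filter_upwards [hev, hfe] with v h1 h2 using h1.trans h2
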